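/- Let (t_n) be a summable sequence of positive reals, H = ℓ²(ℕ), and μ the Gaussian product measure on H with covariance B (Be_n = t_n·e_n). For z ∈ H with Σ |z_n|²/t_n² < ∞ define f_z(w) = Σ_n w_n·conj(z_n)/t_n. Then ∫_H |f_z(w)|² dμ(w) = 2·Σ_n |z_n|²/t_n. -/

import Mathlib

open MeasureTheory

namespace GaussAux

open Filter Real

lemma one_sub_cos_nonneg (u : ℝ) : 0 ≤ 1 - Real.cos u := by
  have := Real.cos_le_one u; linarith

lemma one_sub_cos_le (u : ℝ) : 1 - Real.cos u ≤ u ^ 2 / 2 := by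
  have := Real.one_sub_sq_div_two_le_cos (x := u); linarith

lemma sq_le_one_sub_cos {u : ℝ} (h : |u| ≤ Real.pi) :
    2 / Real.pi ^ 2 * u ^ 2 ≤ 1 - Real.cos u := by
  have := Real.cos_le_one_sub_mul_cos_sq h; linarith

lemma one_sub_exp_neg_le (x : ℝ) : 1 - Real.exp (-x) ≤ x := by
  have := Real.add_one_le_exp (-x); linarith

lemma le_one_sub_exp_neg {x : ℝ} (hx : 0 ≤ x) : x - x ^ 2 ≤ 1 - Real.exp (-x) := by
  have h1 : (1 + x) * Real.exp (-x) ≤ 1 := by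
    have := Real.add_one_le_exp x
    have hpos : (0:ℝ) < Real.exp (-x) := Real.exp_pos _
    calc (1 + x) * Real.exp (-x) ≤ Real.exp x * Real.exp (-x) := by
          apply mul_le_mul_of_nonneg_right _ hpos.le; linarith
      _ = 1 := by rw [← Real.exp_add]; simp
  nlinarith [Real.exp_pos (-x)]


lemma tendsto_invnat : Tendsto (fun k : ℕ => 1 / ((k:ℝ) + 1)) atTop (nhds 0) :=
  tendsto_one_div_add_atTop_nhds_zero_nat

lemma tendsto_cos_aux (a : ℝ) :
    Tendsto (fun k : ℕ => 2 * (1 - Real.cos ((1 / ((k:ℝ)+1)) * a)) / (1 / ((k:ℝ)+1)) ^ 2)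
      atTop (nhds (a ^ 2)) := by
  rw [← tendsto_sub_nhds_zero_iff]
  apply squeeze_zero_norm' (a := fun k : ℕ => 5 / 48 * a ^ 4 * (1 / ((k:ℝ)+1)) ^ 2)
  · filter_upwards [eventually_ge_atTop (Nat.ceil |a|)] with k hk
    set s : ℝ := 1 / ((k:ℝ)+1) with hs
    have hspos : 0 < s := by positivity
    have hu : |s * a| ≤ 1 := by
      rw [abs_mul, abs_of_pos hspos]
      have h1 : |a| ≤ (k:ℝ) + 1 := by
        have h2 : ((Nat.ceil |a| : ℕ) : ℝ) ≤ (k:ℝ) := Nat.cast_le.2 hk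
        have h3 := Nat.le_ceil |a|
        linarith
      rw [hs, div_mul_eq_mul_div, one_mul, div_le_one (by positivity)]
      exact h1
    have hb := Real.cos_bound hu
    have hne : s ^ 2 ≠ 0 := by positivity
    have hkey : 2 * (1 - Real.cos (s * a)) / s ^ 2 - a ^ 2
        = -(2 / s ^ 2) * (Real.cos (s * a) - (1 - (s * a) ^ 2 / 2)) := by
      field_simp
      ring
    rw [Real.norm_eq_abs, hkey, abs_mul, abs_neg, abs_div]
    have h2 : |(2:ℝ)| / |s ^ 2| = 2 / s ^ 2 := by
      rw [abs_of_nonneg (by norm_num : (0:ℝ) ≤ 2), abs_of_pos (by positivity : (0:ℝ) < s ^ 2)]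
    rw [h2]
    calc 2 / s ^ 2 * |Real.cos (s * a) - (1 - (s * a) ^ 2 / 2)|
        ≤ 2 / s ^ 2 * (|s * a| ^ 4 * (5 / 96)) := by
          apply mul_le_mul_of_nonneg_left hb (by positivity)
      _ = 5 / 48 * a ^ 4 * s ^ 2 := by
          rw [abs_mul]
          rw [mul_pow, abs_of_pos hspos]
          have : |a| ^ 4 = a ^ 4 := by
            rw [← abs_pow, abs_of_nonneg (by positivity)]
          rw [this]
          field_simp
          ring
  · have h0 : Tendsto (fun k : ℕ => (1 / ((k:ℝ)+1)) ^ 2) atTop (nhds 0) := by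
      simpa using tendsto_invnat.pow 2
    simpa using h0.const_mul (5 / 48 * a ^ 4)

lemma tendsto_exp_aux (v : ℝ) (hv : 0 ≤ v) :
    Tendsto (fun k : ℕ =>
        2 * (1 - Real.exp (-(v * (1 / ((k:ℝ)+1)) ^ 2) / 2)) / (1 / ((k:ℝ)+1)) ^ 2)
      atTop (nhds v) := by
  rw [← tendsto_sub_nhds_zero_iff]
  apply squeeze_zero_norm' (a := fun k : ℕ => v ^ 2 / 2 * (1 / ((k:ℝ)+1)) ^ 2)
  · filter_upwards with k
    set s : ℝ := 1 / ((k:ℝ)+1) with hs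
    have hspos : 0 < s := by positivity
    set u : ℝ := v * s ^ 2 / 2 with hu
    have hun : 0 ≤ u := by positivity
    have h1 : 1 - Real.exp (-u) ≤ u := one_sub_exp_neg_le u
    have h2 : u - u ^ 2 ≤ 1 - Real.exp (-u) := le_one_sub_exp_neg hun
    have hne : s ^ 2 ≠ 0 := by positivity
    have hform : -(v * s ^ 2) / 2 = -u := by rw [hu]; ring
    rw [Real.norm_eq_abs, hform, abs_le]
    constructor
    · have : 2 * (u - u ^ 2) / s ^ 2 ≤ 2 * (1 - Real.exp (-u)) / s ^ 2 := by
        apply div_le_div_of_nonneg_right _ (by positivity)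
        linarith
      have heq : 2 * (u - u ^ 2) / s ^ 2 = v - 2 * u ^ 2 / s ^ 2 := by
        rw [hu]; field_simp
      have hub : 2 * u ^ 2 / s ^ 2 ≤ v ^ 2 / 2 * s ^ 2 := by
        rw [hu]; rw [div_le_iff₀ (by positivity : (0:ℝ) < s ^ 2)]
        ring_nf
        nlinarith [sq_nonneg (v * s ^ 2), sq_nonneg s, sq_nonneg v]
      linarith [heq ▸ this]
    · have : 2 * (1 - Real.exp (-u)) / s ^ 2 ≤ 2 * u / s ^ 2 := by
        apply div_le_div_of_nonneg_right _ (by positivity)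
        linarith
      have heq : 2 * u / s ^ 2 = v := by rw [hu]; field_simp
      have : 2 * (1 - Real.exp (-u)) / s ^ 2 - v ≤ 0 := by linarith [heq ▸ this]
      have hnn : 0 ≤ v ^ 2 / 2 * s ^ 2 := by positivity
      linarith
  · have h0 : Tendsto (fun k : ℕ => (1 / ((k:ℝ)+1)) ^ 2) atTop (nhds 0) := by
      simpa using tendsto_invnat.pow 2
    simpa using h0.const_mul (v ^ 2 / 2)

variable {Ω : Type*} [MeasurableSpace Ω]

theorem charfn_second_moment (μ : Measure Ω) [IsProbabilityMeasure μ]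
    (S : Ω → ℝ) (hS : Measurable S) (v : ℝ) (hv : 0 ≤ v)
    (h : ∀ s : ℝ, ∫ x, Real.cos (s * S x) ∂μ = Real.exp (-(v * s ^ 2) / 2)) :
    Integrable (fun x => S x ^ 2) μ ∧ ∫ x, S x ^ 2 ∂μ = v := by
  have measCos : ∀ s : ℝ, Measurable fun x => Real.cos (s * S x) :=
    fun s => Real.measurable_cos.comp (measurable_const.mul hS)
  have intCos : ∀ s : ℝ, Integrable (fun x => Real.cos (s * S x)) μ := by
    intro s
    refine (integrable_const (1:ℝ)).mono' (measCos s).aestronglyMeasurable ?_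
    exact ae_of_all _ fun x => by simpa using Real.abs_cos_le_one _
  have intOneSub : ∀ s : ℝ, Integrable (fun x => 1 - Real.cos (s * S x)) μ :=
    fun s => (integrable_const (1:ℝ)).sub (intCos s)
  have oneSub : ∀ s : ℝ,
      ∫ x, (1 - Real.cos (s * S x)) ∂μ = 1 - Real.exp (-(v * s ^ 2) / 2) := by
    intro s
    rw [integral_sub (integrable_const (1:ℝ)) (intCos s), h s]
    simp
  -- truncated second moment bound
  set A : ℝ := Real.pi ^ 2 * v / 4 with hA
  have hAnn : 0 ≤ A := by positivity
  set T : ℕ → Ω → ℝ := fun k x => if |S x| ≤ (k:ℝ) + 1 then S x ^ 2 else 0 with hT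
  have hTmeas : ∀ k, Measurable (T k) := by
    intro k
    exact Measurable.ite (measurableSet_le hS.abs measurable_const) (hS.pow_const 2)
      measurable_const
  have hTnonneg : ∀ k x, 0 ≤ T k x := by
    intro k x; by_cases hx : |S x| ≤ (k:ℝ)+1 <;> simp [hT, hx, sq_nonneg]
  have hTintg : ∀ k, Integrable (T k) μ := by
    intro k
    refine (integrable_const (((k:ℝ)+1) ^ 2)).mono' (hTmeas k).aestronglyMeasurable
      (ae_of_all _ fun x => ?_)
    rw [Real.norm_eq_abs, abs_of_nonneg (hTnonneg k x)]
    by_cases hx : |S x| ≤ (k:ℝ) + 1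
    · have : S x ^ 2 = |S x| ^ 2 := (sq_abs _).symm
      simp only [hT, hx, if_true]
      rw [this]
      exact pow_le_pow_left₀ (abs_nonneg _) hx 2
    · simp only [hT, hx, if_false]
      positivity
  have hTint : ∀ k, ∫ x, T k x ∂μ ≤ A := by
    intro k
    set R : ℝ := (k:ℝ) + 1 with hR
    have hRpos : 0 < R := by positivity
    set s : ℝ := Real.pi / R with hs
    have hspos : 0 < s := div_pos Real.pi_pos hRpos
    set c : ℝ := Real.pi ^ 2 / (2 * s ^ 2) with hc
    have hcpos : 0 < c := by positivity
    have hTle : ∀ x, T k x ≤ c * (1 - Real.cos (s * S x)) := by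
      intro x
      by_cases hx : |S x| ≤ R
      · have habs : |s * S x| ≤ Real.pi := by
          rw [abs_mul, abs_of_pos hspos]
          calc s * |S x| ≤ s * R := by
                exact mul_le_mul_of_nonneg_left hx hspos.le
            _ = Real.pi := by rw [hs, div_mul_cancel₀ _ hRpos.ne']
        have := sq_le_one_sub_cos habs
        have h2 : T k x = S x ^ 2 := by simp [hT, hR ▸ hx]
        rw [h2]
        have hexp : c * (2 / Real.pi ^ 2 * (s * S x) ^ 2) = S x ^ 2 := by
          rw [hc]
          field_simp
        calc S x ^ 2 = c * (2 / Real.pi ^ 2 * (s * S x) ^ 2) := hexp.symm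
          _ ≤ c * (1 - Real.cos (s * S x)) := by
              exact mul_le_mul_of_nonneg_left this hcpos.le
      · have h2 : T k x = 0 := by simp [hT, hR ▸ hx]
        rw [h2]
        exact mul_nonneg hcpos.le (one_sub_cos_nonneg _)
    calc ∫ x, T k x ∂μ ≤ ∫ x, c * (1 - Real.cos (s * S x)) ∂μ :=
          integral_mono (hTintg k) ((intOneSub s).const_mul c) hTle
      _ = c * (1 - Real.exp (-(v * s ^ 2) / 2)) := by
          rw [integral_const_mul, oneSub s]
      _ ≤ c * (v * s ^ 2 / 2) := by
          apply mul_le_mul_of_nonneg_left _ hcpos.le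
          have := one_sub_exp_neg_le (v * s ^ 2 / 2)
          rw [neg_div]
          linarith
      _ = A := by rw [hc, hA]; field_simp; ring
  -- lintegral bound
  have hlint : ∫⁻ x, ENNReal.ofReal (S x ^ 2) ∂μ ≤ ENNReal.ofReal A := by
    have hmono : Monotone fun k => fun x => ENNReal.ofReal (T k x) := by
      intro k m hkm
      intro x
      by_cases hx : |S x| ≤ (k:ℝ) + 1
      · have hx2 : |S x| ≤ (m:ℝ) + 1 := hx.trans (by have h3 : (k:ℝ) ≤ (m:ℝ) := Nat.cast_le.2 hkm; linarith)
        simp [hT, hx, hx2]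
      · simp [hT, hx, hTnonneg]
    have hsup : ∀ x, (⨆ k, ENNReal.ofReal (T k x)) = ENNReal.ofReal (S x ^ 2) := by
      intro x
      apply le_antisymm
      · refine iSup_le fun k => ENNReal.ofReal_le_ofReal ?_
        by_cases hx : |S x| ≤ (k:ℝ) + 1 <;> simp [hT, hx, sq_nonneg]
      · obtain ⟨k, hk⟩ := exists_nat_ge (|S x|)
        have : ENNReal.ofReal (S x ^ 2) = ENNReal.ofReal (T k x) := by
          have : |S x| ≤ (k:ℝ) + 1 := by linarith
          simp [hT, this]
        rw [this]
        exact le_iSup (fun k => ENNReal.ofReal (T k x)) k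
    rw [← lintegral_congr hsup, lintegral_iSup (fun k => (hTmeas k).ennreal_ofReal) hmono]
    refine iSup_le fun k => ?_
    rw [← ofReal_integral_eq_lintegral_ofReal (hTintg k) (ae_of_all _ (hTnonneg k))]
    exact ENNReal.ofReal_le_ofReal (hTint k)
  have intSq : Integrable (fun x => S x ^ 2) μ := by
    constructor
    · exact (hS.pow_const 2).aestronglyMeasurable
    · rw [hasFiniteIntegral_iff_ofReal (ae_of_all _ fun x => sq_nonneg (S x))]
      exact lt_of_le_of_lt hlint ENNReal.ofReal_lt_top
  refine ⟨intSq, ?_⟩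
  set sk : ℕ → ℝ := fun k => 1 / ((k:ℝ) + 1) with hsk
  have hskpos : ∀ k, 0 < sk k := fun k => by positivity
  set F : ℕ → Ω → ℝ := fun k x => 2 * (1 - Real.cos (sk k * S x)) / sk k ^ 2 with hF
  have hFmeas : ∀ k, AEStronglyMeasurable (F k) μ := by
    intro k
    exact (((measurable_const.sub (measCos (sk k))).const_mul 2).div_const _).aestronglyMeasurable
  have hFnonneg : ∀ k x, 0 ≤ F k x := by
    intro k x
    have := one_sub_cos_nonneg (sk k * S x)
    positivity
  have key : Tendsto (fun k => ∫ x, F k x ∂μ) atTop (nhds (∫ x, S x ^ 2 ∂μ)) := by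
    apply tendsto_integral_of_dominated_convergence (fun x => S x ^ 2) hFmeas intSq
    · intro k
      refine ae_of_all _ fun x => ?_
      rw [Real.norm_eq_abs, abs_of_nonneg (hFnonneg k x)]
      have h1 := one_sub_cos_le (sk k * S x)
      have h2 : F k x ≤ 2 * ((sk k * S x) ^ 2 / 2) / sk k ^ 2 := by
        apply div_le_div_of_nonneg_right _ (by positivity)
        linarith
      calc F k x ≤ 2 * ((sk k * S x) ^ 2 / 2) / sk k ^ 2 := h2
        _ = S x ^ 2 := by field_simp [(hskpos k).ne']
    · refine ae_of_all _ fun x => ?_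
      exact tendsto_cos_aux (S x)
  have key2 : Tendsto (fun k => ∫ x, F k x ∂μ) atTop (nhds v) := by
    have hval : ∀ k, ∫ x, F k x ∂μ = 2 * (1 - Real.exp (-(v * sk k ^ 2) / 2)) / sk k ^ 2 := by
      intro k
      have : (fun x => F k x) = fun x => (2 / sk k ^ 2) * (1 - Real.cos (sk k * S x)) := by
        funext x; rw [hF]; ring
      rw [this, integral_const_mul, oneSub (sk k)]
      ring
    simp only [hval]
    exact tendsto_exp_aux v hv
  exact tendsto_nhds_unique key key2


theorem fin_moment (t : ℕ → ℝ) (ht : ∀ n, 0 < t n)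
    (μ : Measure (ℕ → ℂ)) [IsProbabilityMeasure μ]
    (hμ : ∀ y : ℕ → ℂ, (Function.support y).Finite →
      ∫ x, Complex.exp (Complex.I * ((∑' n, (x n * (starRingEnd ℂ) (y n)).re : ℝ) : ℂ)) ∂μ
        = Complex.exp (-(((∑' n, t n * ‖y n‖ ^ 2 : ℝ) : ℂ)) / 2))
    (y : ℕ → ℂ) (F : Finset ℕ) (hy : ∀ n ∉ F, y n = 0) :
    Integrable (fun w => (∑ n ∈ F, (w n * (starRingEnd ℂ) (y n)).re) ^ 2) μ ∧
      ∫ w, (∑ n ∈ F, (w n * (starRingEnd ℂ) (y n)).re) ^ 2 ∂μ = ∑ n ∈ F, t n * ‖y n‖ ^ 2 := by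
  set S : (ℕ → ℂ) → ℝ := fun w => ∑ n ∈ F, (w n * (starRingEnd ℂ) (y n)).re with hS
  have hSmeas : Measurable S := by
    apply Finset.measurable_sum
    intro n _
    exact Complex.measurable_re.comp ((measurable_pi_apply n).mul_const _)
  set v : ℝ := ∑ n ∈ F, t n * ‖y n‖ ^ 2 with hv
  have hvnn : 0 ≤ v := Finset.sum_nonneg fun n _ => mul_nonneg (ht n).le (by positivity)
  have hchar : ∀ s : ℝ, ∫ x, Real.cos (s * S x) ∂μ = Real.exp (-(v * s ^ 2) / 2) := by
    intro s
    have hsupp : (Function.support fun n => (s:ℂ) * y n).Finite := by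
      apply Set.Finite.subset F.finite_toSet
      intro n hn
      by_contra hnF
      exact hn (by simp [hy n hnF])
    have h0 := hμ (fun n => (s:ℂ) * y n) hsupp
    have htsum1 : ∀ x : ℕ → ℂ,
        (∑' n, (x n * (starRingEnd ℂ) ((s:ℂ) * y n)).re) = s * S x := by
      intro x
      rw [tsum_eq_sum (s := F) (fun n hn => by simp [hy n hn])]
      rw [hS, Finset.mul_sum]
      apply Finset.sum_congr rfl
      intro n _
      rw [map_mul, Complex.conj_ofReal]
      have : x n * ((s:ℂ) * (starRingEnd ℂ) (y n)) = (s:ℂ) * (x n * (starRingEnd ℂ) (y n)) := by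
        ring
      rw [this, Complex.re_ofReal_mul]
    have htsum2 : (∑' n, t n * ‖(s:ℂ) * y n‖ ^ 2) = s ^ 2 * v := by
      rw [tsum_eq_sum (s := F) (fun n hn => by simp [hy n hn])]
      rw [hv, Finset.mul_sum]
      apply Finset.sum_congr rfl
      intro n _
      rw [norm_mul, Complex.norm_real, mul_pow, Real.norm_eq_abs, sq_abs]
      ring
    simp only [htsum1, htsum2] at h0
    have hint : Integrable (fun x => Complex.exp (Complex.I * ((s * S x : ℝ) : ℂ))) μ := by
      refine (integrable_const (1:ℝ)).mono' ?_ ?_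
      · apply Measurable.aestronglyMeasurable
        exact Complex.measurable_exp.comp
          (measurable_const.mul (Complex.measurable_ofReal.comp (measurable_const.mul hSmeas)))
      · refine ae_of_all _ fun x => ?_
        rw [Complex.norm_exp]
        simp
    have h1 := integral_re hint
    simp only [RCLike.re_to_complex] at h1
    have hre := h1.trans (congrArg Complex.re h0)
    have hlhs : ∀ x : ℕ → ℂ,
        (Complex.exp (Complex.I * ((s * S x : ℝ) : ℂ))).re = Real.cos (s * S x) := by
      intro x
      rw [mul_comm, Complex.exp_ofReal_mul_I_re]
    simp only [hlhs] at hre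
    rw [hre]
    have : -(((s ^ 2 * v : ℝ) : ℂ)) / 2 = (((-(v * s ^ 2) / 2 : ℝ)) : ℂ) := by
      push_cast; ring
    rw [this, Complex.exp_ofReal_re]
  exact charfn_second_moment μ S hSmeas v hvnn hchar


lemma tsum_mul_sq_le (a b : ℕ → ℝ) (ha : ∀ n, 0 ≤ a n) (hb : ∀ n, 0 ≤ b n)
    (ha2 : Summable (fun n => a n ^ 2)) (hb2 : Summable fun n => b n ^ 2) :
    (∑' n, a n * b n) ^ 2 ≤ (∑' n, a n ^ 2) * (∑' n, b n ^ 2) := by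
  set A := ∑' n, a n ^ 2 with hA
  set B := ∑' n, b n ^ 2 with hB
  have hAnn : 0 ≤ A := tsum_nonneg fun n => sq_nonneg _
  have hBnn : 0 ≤ B := tsum_nonneg fun n => sq_nonneg _
  have hab : Summable fun n => a n * b n := by
    refine Summable.of_nonneg_of_le (fun n => mul_nonneg (ha n) (hb n))
      (fun n => ?_) ((ha2.add hb2).div_const 2)
    nlinarith [sq_nonneg (a n - b n)]
  have hle : (∑' n, a n * b n) ≤ Real.sqrt (A * B) := by
    refine hab.tsum_le_of_sum_le fun s => ?_
    have h1 : (∑ n ∈ s, a n * b n) ^ 2 ≤ (∑ n ∈ s, a n ^ 2) * (∑ n ∈ s, b n ^ 2) :=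
      Finset.sum_mul_sq_le_sq_mul_sq s a b
    have h2 : (∑ n ∈ s, a n ^ 2) ≤ A := ha2.sum_le_tsum s (fun n _ => sq_nonneg _)
    have h3 : (∑ n ∈ s, b n ^ 2) ≤ B := hb2.sum_le_tsum s (fun n _ => sq_nonneg _)
    have h4 : (∑ n ∈ s, a n * b n) ^ 2 ≤ A * B := by
      refine h1.trans ?_
      apply mul_le_mul h2 h3 (Finset.sum_nonneg fun n _ => sq_nonneg _) hAnn
    have h5 : 0 ≤ ∑ n ∈ s, a n * b n := Finset.sum_nonneg fun n _ => mul_nonneg (ha n) (hb n)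
    calc (∑ n ∈ s, a n * b n) = Real.sqrt ((∑ n ∈ s, a n * b n) ^ 2) := by
          rw [Real.sqrt_sq h5]
      _ ≤ Real.sqrt (A * B) := Real.sqrt_le_sqrt h4
  have h6 : 0 ≤ ∑' n, a n * b n := tsum_nonneg fun n => mul_nonneg (ha n) (hb n)
  calc (∑' n, a n * b n) ^ 2 ≤ Real.sqrt (A * B) ^ 2 := by
        apply pow_le_pow_left₀ h6 hle
    _ = A * B := Real.sq_sqrt (mul_nonneg hAnn hBnn)


end GaussAux

open GaussAux Filter

/-- Let `(t_n)` be a summable sequence of positive reals and `μ` the Gaussian product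
measure with covariance `B`, `B e_n = t_n e_n` (characterized by its characteristic
function `∫ e^(i Re⟨x,y⟩) dμ(x) = e^(−½⟨By,y⟩)`). For `z` with `Σ |z_n|²/t_n² < ∞` and
`f_z(w) = Σ_n w_n conj(z_n)/t_n`, one has `∫ |f_z|² dμ = 2 Σ_n |z_n|²/t_n`. -/
theorem gaussian_product_l2_norm (t : ℕ → ℝ) (ht : ∀ n, 0 < t n) (hts : Summable t)
    (μ : Measure (ℕ → ℂ)) [IsProbabilityMeasure μ]
    (hμ : ∀ y : ℕ → ℂ, (Function.support y).Finite →
      ∫ x, Complex.exp (Complex.I * ((∑' n, (x n * (starRingEnd ℂ) (y n)).re : ℝ) : ℂ)) ∂μ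
        = Complex.exp (-(((∑' n, t n * ‖y n‖ ^ 2 : ℝ) : ℂ)) / 2))
    (z : ℕ → ℂ) (hz : Summable fun n => ‖z n‖ ^ 2 / (t n) ^ 2) :
    ∫ w, ‖∑' n, w n * (starRingEnd ℂ) (z n) / (t n)‖ ^ 2 ∂μ
      = 2 * ∑' n, ‖z n‖ ^ 2 / t n := by
  classical
  set c : ℕ → ℂ := fun n => (starRingEnd ℂ) (z n) / (t n : ℂ) with hc
  have hgoal_fun : ∀ w : ℕ → ℂ, (∑' n, w n * (starRingEnd ℂ) (z n) / (t n : ℂ))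
      = ∑' n, w n * c n := by
    intro w; apply tsum_congr; intro n; rw [hc, mul_div_assoc]
  -- norms of c
  have hcnorm : ∀ n, ‖c n‖ ^ 2 = ‖z n‖ ^ 2 / t n ^ 2 := by
    intro n
    rw [hc, norm_div, RCLike.norm_conj, Complex.norm_real, Real.norm_eq_abs,
      abs_of_pos (ht n), div_pow]
  have hc2sum : Summable fun n => ‖c n‖ ^ 2 := by
    simpa only [hcnorm] using hz
  set C0 : ℝ := ∑' n, ‖c n‖ ^ 2 with hC0
  have hC0nn : 0 ≤ C0 := tsum_nonneg fun n => sq_nonneg _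
  -- coordinate moments
  have hcoordre : ∀ n, Integrable (fun w : ℕ → ℂ => ((w n).re) ^ 2) μ ∧
      ∫ w, ((w n).re) ^ 2 ∂μ = t n := by
    intro n
    have h := fin_moment t ht μ hμ (fun m => if m = n then (1:ℂ) else 0) {n}
      (fun m hm => by simp only [Finset.mem_singleton] at hm; simp [hm])
    simpa using h
  have hcoordim : ∀ n, Integrable (fun w : ℕ → ℂ => ((w n).im) ^ 2) μ ∧
      ∫ w, ((w n).im) ^ 2 ∂μ = t n := by
    intro n
    have h := fin_moment t ht μ hμ (fun m => if m = n then Complex.I else 0) {n}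
      (fun m hm => by simp only [Finset.mem_singleton] at hm; simp [hm])
    simpa [Complex.mul_re] using h
  have hcoord : ∀ n, Integrable (fun w : ℕ → ℂ => ‖w n‖ ^ 2) μ ∧
      ∫ w, ‖w n‖ ^ 2 ∂μ = 2 * t n := by
    intro n
    have heq : (fun w : ℕ → ℂ => ‖w n‖ ^ 2)
        = fun w => ((w n).re) ^ 2 + ((w n).im) ^ 2 := by
      funext w
      rw [Complex.sq_norm, Complex.normSq_apply]; ring
    constructor
    · rw [heq]; exact (hcoordre n).1.add (hcoordim n).1
    · rw [heq, integral_add (hcoordre n).1 (hcoordim n).1, (hcoordre n).2, (hcoordim n).2]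
      ring
  -- summability of the variance series
  have hv_sum : Summable fun n => ‖z n‖ ^ 2 / t n := by
    have hA : ∀ n, ‖z n‖ ^ 2 / t n ^ 2 ≤ ∑' m, ‖z m‖ ^ 2 / t m ^ 2 :=
      fun n => hz.le_tsum n (fun m _ => by positivity)
    refine Summable.of_nonneg_of_le (fun n => div_nonneg (by positivity) (ht n).le)
      (fun n => ?_) (hts.mul_left (∑' m, ‖z m‖ ^ 2 / t m ^ 2))
    have hne : t n ≠ 0 := (ht n).ne'
    have heq : ‖z n‖ ^ 2 / t n = (‖z n‖ ^ 2 / t n ^ 2) * t n := by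
      field_simp
    rw [heq]
    exact mul_le_mul_of_nonneg_right (hA n) (ht n).le
  set V : ℕ → ℝ := fun N => ∑ n ∈ Finset.range N, ‖z n‖ ^ 2 / t n with hV
  -- partial sums moments
  have hgNre : ∀ N : ℕ, Integrable (fun w : ℕ → ℂ =>
        ((∑ n ∈ Finset.range N, w n * c n).re) ^ 2) μ ∧
      ∫ w, ((∑ n ∈ Finset.range N, w n * c n).re) ^ 2 ∂μ = V N := by
    intro N
    have h := fin_moment t ht μ hμ
      (fun n => if n ∈ Finset.range N then z n / (t n : ℂ) else 0) (Finset.range N)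
      (fun n hn => by simp [hn])
    have hsummand : ∀ w : ℕ → ℂ,
        (∑ n ∈ Finset.range N, (w n * (starRingEnd ℂ)
          (if n ∈ Finset.range N then z n / (t n : ℂ) else 0)).re)
        = (∑ n ∈ Finset.range N, w n * c n).re := by
      intro w
      rw [Complex.re_sum]
      apply Finset.sum_congr rfl
      intro n hn
      rw [if_pos hn, map_div₀, Complex.conj_ofReal]
    have hvar : (∑ n ∈ Finset.range N, t n *
        ‖if n ∈ Finset.range N then z n / (t n : ℂ) else 0‖ ^ 2) = V N := by
      apply Finset.sum_congr rfl
      intro n hn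
      have hne : t n ≠ 0 := (ht n).ne'
      rw [if_pos hn, norm_div, Complex.norm_real, Real.norm_eq_abs, abs_of_pos (ht n),
        div_pow]
      field_simp
    simp only [hsummand, hvar] at h
    exact h
  have hgNim : ∀ N : ℕ, Integrable (fun w : ℕ → ℂ =>
        ((∑ n ∈ Finset.range N, w n * c n).im) ^ 2) μ ∧
      ∫ w, ((∑ n ∈ Finset.range N, w n * c n).im) ^ 2 ∂μ = V N := by
    intro N
    have h := fin_moment t ht μ hμ
      (fun n => if n ∈ Finset.range N then Complex.I * (z n / (t n : ℂ)) else 0)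
      (Finset.range N) (fun n hn => by simp [hn])
    have hsummand : ∀ w : ℕ → ℂ,
        (∑ n ∈ Finset.range N, (w n * (starRingEnd ℂ)
          (if n ∈ Finset.range N then Complex.I * (z n / (t n : ℂ)) else 0)).re)
        = (∑ n ∈ Finset.range N, w n * c n).im := by
      intro w
      rw [Complex.im_sum]
      apply Finset.sum_congr rfl
      intro n hn
      rw [if_pos hn, map_mul, map_div₀, Complex.conj_ofReal, Complex.conj_I]
      have : w n * (-Complex.I * ((starRingEnd ℂ) (z n) / (t n : ℂ)))
          = (w n * c n) * (-Complex.I) := by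
        rw [hc]; ring
      rw [this]
      simp [Complex.mul_re]
    have hvar : (∑ n ∈ Finset.range N, t n *
        ‖if n ∈ Finset.range N then Complex.I * (z n / (t n : ℂ)) else 0‖ ^ 2) = V N := by
      apply Finset.sum_congr rfl
      intro n hn
      have hne : t n ≠ 0 := (ht n).ne'
      rw [if_pos hn, norm_mul, Complex.norm_I, one_mul, norm_div, Complex.norm_real,
        Real.norm_eq_abs, abs_of_pos (ht n), div_pow]
      field_simp
    simp only [hsummand, hvar] at h
    exact h
  have hgN : ∀ N : ℕ, Integrable (fun w : ℕ → ℂ =>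
        ‖∑ n ∈ Finset.range N, w n * c n‖ ^ 2) μ ∧
      ∫ w, ‖∑ n ∈ Finset.range N, w n * c n‖ ^ 2 ∂μ = 2 * V N := by
    intro N
    have heq : (fun w : ℕ → ℂ => ‖∑ n ∈ Finset.range N, w n * c n‖ ^ 2)
        = fun w => ((∑ n ∈ Finset.range N, w n * c n).re) ^ 2
            + ((∑ n ∈ Finset.range N, w n * c n).im) ^ 2 := by
      funext w
      rw [Complex.sq_norm, Complex.normSq_apply]; ring
    constructor
    · rw [heq]; exact (hgNre N).1.add (hgNim N).1
    · rw [heq, integral_add (hgNre N).1 (hgNim N).1, (hgNre N).2, (hgNim N).2]; ring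
  -- lintegral of the dominating series
  have hmeasn : ∀ n : ℕ, Measurable fun w : ℕ → ℂ => ENNReal.ofReal (‖w n‖ ^ 2) :=
    fun n => ((measurable_pi_apply n).norm.pow_const 2).ennreal_ofReal
  have hDlint : ∫⁻ w, ∑' n, ENNReal.ofReal (‖w n‖ ^ 2) ∂μ
      = ∑' n, ENNReal.ofReal (2 * t n) := by
    rw [lintegral_tsum (fun n => (hmeasn n).aemeasurable)]
    apply tsum_congr
    intro n
    rw [← ofReal_integral_eq_lintegral_ofReal (hcoord n).1
      (ae_of_all _ fun w => sq_nonneg _), (hcoord n).2]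
  have hfin : (∑' n, ENNReal.ofReal (2 * t n)) ≠ ⊤ := by
    rw [← ENNReal.ofReal_tsum_of_nonneg (fun n => mul_nonneg (by norm_num) (ht n).le)
      (hts.mul_left 2)]
    exact ENNReal.ofReal_ne_top
  have hmeasD : Measurable fun w : ℕ → ℂ => ∑' n, ENNReal.ofReal (‖w n‖ ^ 2) :=
    Measurable.ennreal_tsum hmeasn
  have hae : ∀ᵐ w ∂μ, (∑' n, ENNReal.ofReal (‖w n‖ ^ 2)) < ⊤ :=
    ae_lt_top hmeasD (by rw [hDlint]; exact hfin)
  set G : (ℕ → ℂ) → ℝ := fun w => (∑' n, ENNReal.ofReal (‖w n‖ ^ 2)).toReal * C0 with hG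
  have hGint : Integrable G μ :=
    (integrable_toReal_of_lintegral_ne_top hmeasD.aemeasurable
      (by rw [hDlint]; exact hfin)).mul_const C0
  -- a.e. facts
  have hkey : ∀ w : ℕ → ℂ, (∑' n, ENNReal.ofReal (‖w n‖ ^ 2)) < ⊤ →
      Summable (fun n => w n * c n) ∧
      ‖∑' n, w n * c n‖ ^ 2 ≤ G w ∧
      ∀ N : ℕ, ‖∑ n ∈ Finset.range N, w n * c n‖ ^ 2 ≤ G w := by
    intro w hw
    have hsum2 : Summable fun n => ‖w n‖ ^ 2 := by
      have h1 := ENNReal.summable_toReal hw.ne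
      exact h1.congr fun n => ENNReal.toReal_ofReal (sq_nonneg _)
    have hWD : (∑' n, ‖w n‖ ^ 2) = (∑' n, ENNReal.ofReal (‖w n‖ ^ 2)).toReal := by
      rw [ENNReal.tsum_toReal_eq (fun n => ENNReal.ofReal_ne_top)]
      exact tsum_congr fun n => (ENNReal.toReal_ofReal (sq_nonneg _)).symm
    have hsumn : Summable fun n => ‖w n * c n‖ := by
      refine Summable.of_nonneg_of_le (fun n => norm_nonneg _) (fun n => ?_)
        ((hsum2.add hc2sum).div_const 2)
      rw [norm_mul]
      nlinarith [sq_nonneg (‖w n‖ - ‖c n‖), norm_nonneg (w n), norm_nonneg (c n)]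
    have hsumQ : Summable fun n => w n * c n := hsumn.of_norm
    have hCS : (∑' n, ‖w n * c n‖) ^ 2 ≤ (∑' n, ‖w n‖ ^ 2) * C0 := by
      have h2 : (∑' n, ‖w n * c n‖) = ∑' n, ‖w n‖ * ‖c n‖ :=
        tsum_congr fun n => norm_mul _ _
      rw [h2, hC0]
      exact tsum_mul_sq_le (fun n => ‖w n‖) (fun n => ‖c n‖)
        (fun n => norm_nonneg _) (fun n => norm_nonneg _) hsum2 hc2sum
    have hGw : (∑' n, ‖w n‖ ^ 2) * C0 = G w := by rw [hG, hWD]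
    refine ⟨hsumQ, ?_, ?_⟩
    · have h1 : ‖∑' n, w n * c n‖ ≤ ∑' n, ‖w n * c n‖ := norm_tsum_le_tsum_norm hsumn
      calc ‖∑' n, w n * c n‖ ^ 2 ≤ (∑' n, ‖w n * c n‖) ^ 2 :=
            pow_le_pow_left₀ (norm_nonneg _) h1 2
        _ ≤ (∑' n, ‖w n‖ ^ 2) * C0 := hCS
        _ = G w := hGw
    · intro N
      have h1 : ‖∑ n ∈ Finset.range N, w n * c n‖ ≤ ∑' n, ‖w n * c n‖ :=
        (norm_sum_le _ _).trans (hsumn.sum_le_tsum _ (fun n _ => norm_nonneg _))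
      calc ‖∑ n ∈ Finset.range N, w n * c n‖ ^ 2 ≤ (∑' n, ‖w n * c n‖) ^ 2 :=
            pow_le_pow_left₀ (norm_nonneg _) h1 2
        _ ≤ (∑' n, ‖w n‖ ^ 2) * C0 := hCS
        _ = G w := hGw
  -- dominated convergence
  have hFmeas : ∀ N : ℕ, AEStronglyMeasurable
      (fun w : ℕ → ℂ => ‖∑ n ∈ Finset.range N, w n * c n‖ ^ 2) μ := by
    intro N
    apply Measurable.aestronglyMeasurable
    apply Measurable.pow_const
    apply Measurable.norm
    exact Finset.measurable_sum _ (fun n _ => (measurable_pi_apply n).mul_const _)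
  have htendI : Tendsto (fun N => ∫ w, ‖∑ n ∈ Finset.range N, w n * c n‖ ^ 2 ∂μ)
      atTop (nhds (∫ w, ‖∑' n, w n * c n‖ ^ 2 ∂μ)) := by
    apply tendsto_integral_of_dominated_convergence G hFmeas hGint
    · intro N
      filter_upwards [hae] with w hw
      have hnn : (0:ℝ) ≤ ‖∑ n ∈ Finset.range N, w n * c n‖ ^ 2 := by positivity
      rw [Real.norm_eq_abs, _root_.abs_of_nonneg hnn]
      exact ((hkey w hw).2.2) N
    · filter_upwards [hae] with w hw
      have h1 := ((hkey w hw).1).hasSum.tendsto_sum_nat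
      exact (h1.norm.pow 2)
  have hVlim : Tendsto (fun N => 2 * V N) atTop (nhds (2 * ∑' n, ‖z n‖ ^ 2 / t n)) := by
    exact (hv_sum.hasSum.tendsto_sum_nat).const_mul 2
  have hIeq : (fun N => ∫ w, ‖∑ n ∈ Finset.range N, w n * c n‖ ^ 2 ∂μ)
      = fun N => 2 * V N := funext fun N => (hgN N).2
  rw [hIeq] at htendI
  have hfinal := tendsto_nhds_unique htendI hVlim
  calc ∫ w, ‖∑' n, w n * (starRingEnd ℂ) (z n) / (t n : ℂ)‖ ^ 2 ∂μ
      = ∫ w, ‖∑' n, w n * c n‖ ^ 2 ∂μ := by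
        apply integral_congr_ae
        refine ae_of_all _ fun w => ?_
        show ‖∑' n, w n * (starRingEnd ℂ) (z n) / (t n : ℂ)‖ ^ 2
            = ‖∑' n, w n * c n‖ ^ 2
        rw [hgoal_fun w]
    _ = 2 * ∑' n, ‖z n‖ ^ 2 / t n := hfinal
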